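/- Let d ≥ 2 and let G be a weakly branch group of bijective isometries of X_d = ℕ → Fin d. Let ν be a Borel probability measure on the space 𝒞* of nonempty compact subsets of X_d (with the Hausdorff metric) that is invariant under the action B ↦ g(B) of G. Let A ⊆ X_d be a clopen set and let Ã ⊇ A be a closed set with μ_d(Ã \ A) = 0, where μ_d is the uniform Bernoulli measure on X_d. Then ν({B ∈ 𝒞* : B ⊆ Ã}) = ν({B ∈ 𝒞* : B ⊆ A}). -/

import Mathlib

open Set MeasureTheory TopologicalSpace

noncomputable section

/-- The boundary of the `d`-regular rooted tree: infinite words over a `d`-letter alphabet. -/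
abbrev XX (d : ℕ) : Type := ℕ → Fin d

/-- The standard ultrametric: `dist x y = (1/2)^n` where `n` is the first index where `x,y`
differ. -/
noncomputable instance XXms (d : ℕ) : MetricSpace (XX d) := PiNat.metricSpace

/-- The cylinder determined by a finite word `w`: all infinite words starting with `w`. -/
def Cyl {d : ℕ} (w : List (Fin d)) : Set (XX d) :=
  {x | ∀ i : Fin w.length, x i.1 = w.get i}

/-- `G` acts transitively on every level of the tree. -/
def LevelTransitive {d : ℕ} (G : Subgroup (XX d ≃ᵢ XX d)) : Prop :=
  ∀ u v : List (Fin d), u.length = v.length →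
    ∃ g ∈ G, (g : XX d ≃ᵢ XX d) '' Cyl u = Cyl v

/-- The rigid stabilizer of the vertex (finite word) `v`: elements of `G` supported in
`Cyl v`. -/
def rist {d : ℕ} (G : Subgroup (XX d ≃ᵢ XX d)) (v : List (Fin d)) :
    Set (XX d ≃ᵢ XX d) :=
  {g | g ∈ G ∧ ∀ x : XX d, g x ≠ x → x ∈ Cyl v}

/-- The rigid stabilizer of level `n`: the subgroup generated by the rigid stabilizers of
all vertices of level `n`. -/
def ristLevel {d : ℕ} (G : Subgroup (XX d ≃ᵢ XX d)) (n : ℕ) :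
    Subgroup (XX d ≃ᵢ XX d) :=
  Subgroup.closure (⋃ v ∈ {w : List (Fin d) | w.length = n}, rist G v)

/-- A weakly branch group: level-transitive with all rigid vertex stabilizers nontrivial. -/
def WeaklyBranch {d : ℕ} (G : Subgroup (XX d ≃ᵢ XX d)) : Prop :=
  LevelTransitive G ∧ ∀ v : List (Fin d), ∃ g ∈ rist G v, g ≠ 1

/-- A branch group: weakly branch and every rigid level stabilizer has finite index. -/
def Branch {d : ℕ} (G : Subgroup (XX d ≃ᵢ XX d)) : Prop :=
  WeaklyBranch G ∧ ∀ n : ℕ, (ristLevel G n).index ≠ 0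

/-- The Borel σ-algebra on the space of nonempty compact subsets of `X_d`, for its Hausdorff
metric. -/
instance NCms (d : ℕ) : MeasurableSpace (NonemptyCompacts (XX d)) :=
  borel (NonemptyCompacts (XX d))

instance NCborel (d : ℕ) : BorelSpace (NonemptyCompacts (XX d)) := ⟨rfl⟩

/-- The action of a bijective isometry `g` of `X_d` on nonempty compact subsets,
`B ↦ g(B)`. -/
def imageNC {d : ℕ} (g : XX d ≃ᵢ XX d) (B : NonemptyCompacts (XX d)) :
    NonemptyCompacts (XX d) :=
  ⟨⟨(g : XX d ≃ᵢ XX d) '' (B : Set (XX d)), B.isCompact.image g.continuous⟩,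
    B.nonempty.image _⟩

namespace S8

variable {d : ℕ}

/-- The length-`n` prefix of an infinite word. -/
def pref (n : ℕ) (x : XX d) : Fin n → Fin d := fun i => x i

lemma pref_eq_iff {n : ℕ} {x y : XX d} : pref n x = pref n y ↔ ∀ i < n, x i = y i := by
  constructor
  · intro h i hi; exact congrFun h ⟨i, hi⟩
  · intro h; funext i; exact h i i.2

lemma pref_eq_iff_dist {n : ℕ} {x y : XX d} :
    pref n x = pref n y ↔ dist x y ≤ (1 / 2 : ℝ) ^ n := by
  rw [pref_eq_iff]
  constructor
  · intro h
    exact PiNat.mem_cylinder_iff_dist_le.1 (PiNat.mem_cylinder_iff.2 h)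
  · intro h
    exact PiNat.mem_cylinder_iff.1 (PiNat.mem_cylinder_iff_dist_le.2 h)

lemma pref_eq_map {n : ℕ} (g : XX d ≃ᵢ XX d) {x y : XX d} (h : pref n x = pref n y) :
    pref n (g x) = pref n (g y) := by
  rw [pref_eq_iff_dist] at h ⊢
  rwa [g.dist_eq]

/-- The level-`n` cylinder determined by a word `u`. -/
def cls {n : ℕ} (u : Fin n → Fin d) : Set (XX d) := {x | pref n x = u}

lemma mem_cls {n : ℕ} {u : Fin n → Fin d} {x : XX d} : x ∈ cls u ↔ pref n x = u := Iff.rfl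

lemma mem_Cyl_ofFn {n : ℕ} (u : Fin n → Fin d) (x : XX d) :
    x ∈ Cyl (List.ofFn u) ↔ pref n x = u := by
  simp only [Cyl, mem_setOf_eq, List.get_ofFn]
  constructor
  · intro h
    funext i
    have := h (Fin.cast (List.length_ofFn : (List.ofFn u).length = n).symm i)
    simpa [pref] using this
  · intro h i
    have := congrFun h (Fin.cast (List.length_ofFn : (List.ofFn u).length = n) i)
    simpa [pref] using this

lemma cls_eq_Cyl {n : ℕ} (u : Fin n → Fin d) : cls u = Cyl (List.ofFn u) := by
  ext x; rw [mem_cls, mem_Cyl_ofFn]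

lemma measurableSet_cls {n : ℕ} (u : Fin n → Fin d) : MeasurableSet (cls (d := d) u) := by
  have : cls (d := d) u = ⋂ i : Fin n, (fun x : XX d => x (i : ℕ)) ⁻¹' {u i} := by
    ext x
    simp only [mem_cls, mem_iInter, mem_preimage, mem_singleton_iff]
    constructor
    · intro h i; exact congrFun h i
    · intro h; funext i; exact h i
  rw [this]
  exact MeasurableSet.iInter fun i => (measurable_pi_apply _) (measurableSet_singleton _)

lemma cls_disjoint {n : ℕ} {u v : Fin n → Fin d} (h : u ≠ v) :
    Disjoint (cls (d := d) u) (cls v) := by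
  rw [Set.disjoint_left]
  intro x hxu hxv
  exact h (hxu.symm.trans hxv)

/-- A canonical point with prescribed prefix. -/
def ext0 (hd : 0 < d) {n : ℕ} (u : Fin n → Fin d) : XX d :=
  fun i => if h : i < n then u ⟨i, h⟩ else ⟨0, hd⟩

lemma pref_ext0 (hd : 0 < d) {n : ℕ} (u : Fin n → Fin d) : pref n (ext0 hd u) = u := by
  funext i
  simp [pref, ext0, i.2]

/-- The action of an isometry on level-`n` words. -/
def act (hd : 0 < d) (n : ℕ) (g : XX d ≃ᵢ XX d) (u : Fin n → Fin d) : Fin n → Fin d :=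
  pref n (g (ext0 hd u))

lemma act_pref (hd : 0 < d) (n : ℕ) (g : XX d ≃ᵢ XX d) (x : XX d) :
    act hd n g (pref n x) = pref n (g x) :=
  pref_eq_map g (pref_ext0 hd (pref n x))

/-- The permutation of level-`n` words induced by an isometry. -/
def permOf (hd : 0 < d) (n : ℕ) (g : XX d ≃ᵢ XX d) : Equiv.Perm (Fin n → Fin d) where
  toFun := act hd n g
  invFun := act hd n g.symm
  left_inv u := by
    show act hd n g.symm (pref n (g (ext0 hd u))) = u
    rw [act_pref]
    simp [pref_ext0 hd u]
  right_inv u := by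
    show act hd n g (pref n (g.symm (ext0 hd u))) = u
    rw [act_pref]
    simp [pref_ext0 hd u]

lemma permOf_apply_pref (hd : 0 < d) (n : ℕ) (g : XX d ≃ᵢ XX d) (x : XX d) :
    permOf hd n g (pref n x) = pref n (g x) := act_pref hd n g x

lemma permOf_mul (hd : 0 < d) (n : ℕ) (g h : XX d ≃ᵢ XX d) :
    permOf hd n (g * h) = permOf hd n g * permOf hd n h := by
  refine Equiv.ext fun u => ?_
  show act hd n (g * h) u = act hd n g (act hd n h u)
  have : act hd n h u = pref n (h (ext0 hd u)) := rfl
  rw [this, act_pref]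
  rfl

lemma permOf_one (hd : 0 < d) (n : ℕ) : permOf hd n (1 : XX d ≃ᵢ XX d) = 1 := by
  refine Equiv.ext fun u => ?_
  show act hd n 1 u = u
  show pref n ((1 : XX d ≃ᵢ XX d) (ext0 hd u)) = u
  rw [IsometryEquiv.coe_one]
  exact pref_ext0 hd u

/-- The group of permutations of level-`n` words induced by elements of `G`. -/
def QS (hd : 0 < d) (n : ℕ) (G : Subgroup (XX d ≃ᵢ XX d)) :
    Subgroup (Equiv.Perm (Fin n → Fin d)) where
  carrier := {π | ∃ g ∈ G, permOf hd n g = π}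
  mul_mem' := by
    rintro π σ ⟨g, hg, rfl⟩ ⟨h, hh, rfl⟩
    exact ⟨g * h, mul_mem hg hh, permOf_mul hd n g h⟩
  one_mem' := ⟨1, one_mem G, permOf_one hd n⟩
  inv_mem' := by
    rintro π ⟨g, hg, rfl⟩
    refine ⟨g⁻¹, inv_mem hg, ?_⟩
    have : permOf hd n g⁻¹ * permOf hd n g = 1 := by
      rw [← permOf_mul, inv_mul_cancel, permOf_one]
    exact eq_inv_of_mul_eq_one_left this

lemma mem_QS {hd : 0 < d} {n : ℕ} {G : Subgroup (XX d ≃ᵢ XX d)}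
    {π : Equiv.Perm (Fin n → Fin d)} : π ∈ QS hd n G ↔ ∃ g ∈ G, permOf hd n g = π :=
  Iff.rfl

lemma QS_trans {G : Subgroup (XX d ≃ᵢ XX d)} (hG : LevelTransitive G) (hd : 0 < d) (n : ℕ)
    (u v : Fin n → Fin d) : ∃ π ∈ QS hd n G, π u = v := by
  obtain ⟨g, hg, him⟩ := hG (List.ofFn u) (List.ofFn v) (by simp)
  refine ⟨permOf hd n g, ⟨g, hg, rfl⟩, ?_⟩
  have h1 : (g : XX d ≃ᵢ XX d) (ext0 hd u) ∈ Cyl (List.ofFn v) := by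
    rw [← him]
    exact mem_image_of_mem _ ((mem_Cyl_ofFn u _).2 (pref_ext0 hd u))
  exact (mem_Cyl_ofFn v _).1 h1

open Classical in
/-- The finite group of level-`n` permutations induced by `G`, as a finset. -/
noncomputable def QF (hd : 0 < d) (n : ℕ) (G : Subgroup (XX d ≃ᵢ XX d)) :
    Finset (Equiv.Perm (Fin n → Fin d)) :=
  Finset.univ.filter (· ∈ QS hd n G)

lemma mem_QF {hd : 0 < d} {n : ℕ} {G : Subgroup (XX d ≃ᵢ XX d)}
    {π : Equiv.Perm (Fin n → Fin d)} : π ∈ QF hd n G ↔ π ∈ QS hd n G := by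
  classical
  simp [QF]

lemma count_fiber {G : Subgroup (XX d ≃ᵢ XX d)} (hG : LevelTransitive G) (hd : 0 < d) (n : ℕ)
    (u v : Fin n → Fin d) :
    ((QF hd n G).filter (fun π => π u = v)).card
      = ((QF hd n G).filter (fun π => π u = u)).card := by
  classical
  obtain ⟨π₀, hπ₀, hπ₀u⟩ := QS_trans hG hd n u v
  refine Finset.card_bij' (fun π _ => π₀⁻¹ * π) (fun π _ => π₀ * π) ?_ ?_ ?_ ?_
  · intro π hπ
    rw [Finset.mem_filter] at hπ ⊢
    refine ⟨mem_QF.2 (mul_mem (inv_mem hπ₀) (mem_QF.1 hπ.1)), ?_⟩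
    rw [Equiv.Perm.mul_apply, hπ.2, ← hπ₀u]
    simp
  · intro π hπ
    rw [Finset.mem_filter] at hπ ⊢
    refine ⟨mem_QF.2 (mul_mem hπ₀ (mem_QF.1 hπ.1)), ?_⟩
    rw [Equiv.Perm.mul_apply, hπ.2, hπ₀u]
  · intro π hπ; group
  · intro π hπ; group

lemma card_words : Fintype.card (Fin n → Fin d) = d ^ n := by
  simp [Fintype.card_fun]

lemma QF_card {G : Subgroup (XX d ≃ᵢ XX d)} (hG : LevelTransitive G) (hd : 0 < d) (n : ℕ)
    (u : Fin n → Fin d) :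
    (QF hd n G).card = d ^ n * ((QF hd n G).filter (fun π => π u = u)).card := by
  classical
  rw [Finset.card_eq_sum_card_fiberwise (f := fun π : Equiv.Perm (Fin n → Fin d) => π u) (t := Finset.univ)
    (fun π _ => Finset.mem_univ _)]
  rw [Finset.sum_congr rfl (fun v _ => count_fiber hG hd n u v)]
  rw [Finset.sum_const, Finset.card_univ, card_words, smul_eq_mul]

lemma count_in {G : Subgroup (XX d ≃ᵢ XX d)} (hG : LevelTransitive G) (hd : 0 < d) (n : ℕ)
    (u : Fin n → Fin d) (V : Finset (Fin n → Fin d)) :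
    ((QF hd n G).filter (fun π => π u ∈ V)).card * d ^ n
      = V.card * (QF hd n G).card := by
  classical
  have h1 : ((QF hd n G).filter (fun π => π u ∈ V)).card
      = ∑ v ∈ V, ((QF hd n G).filter (fun π => π u = v)).card := by
    rw [Finset.card_eq_sum_card_fiberwise (s := (QF hd n G).filter (fun π => π u ∈ V)) (f := fun π : Equiv.Perm (Fin n → Fin d) => π u) (t := V)
      (fun π hπ => (Finset.mem_filter.1 hπ).2)]
    refine Finset.sum_congr rfl fun v hv => ?_
    congr 1
    rw [Finset.filter_filter]
    refine Finset.filter_congr fun π _ => ?_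
    constructor
    · rintro ⟨-, h⟩; exact h
    · intro h; exact ⟨by simpa [h] using hv, h⟩
  rw [h1, Finset.sum_congr rfl (fun v _ => count_fiber hG hd n u v), Finset.sum_const,
    smul_eq_mul, QF_card hG hd n u]
  ring


lemma level_of_clopen {A : Set (XX d)} (hA : IsClopen A) :
    ∃ n₀ : ℕ, ∀ x y : XX d, pref n₀ x = pref n₀ y → (x ∈ A ↔ y ∈ A) := by
  have H : ∀ x : XX d, ∃ k : ℕ, PiNat.cylinder x k ⊆ A ∨ PiNat.cylinder x k ⊆ Aᶜ := by
    intro x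
    by_cases hx : x ∈ A
    · obtain ⟨ε, εpos, hε⟩ := Metric.isOpen_iff.1 hA.isOpen x hx
      obtain ⟨k, hk⟩ : ∃ k : ℕ, (1 / 2 : ℝ) ^ k < ε := exists_pow_lt_of_lt_one εpos (by norm_num)
      refine ⟨k, Or.inl fun y hy => hε ?_⟩
      exact lt_of_le_of_lt (PiNat.mem_cylinder_iff_dist_le.1 hy) hk
    · obtain ⟨ε, εpos, hε⟩ := Metric.isOpen_iff.1 hA.compl.isOpen x hx
      obtain ⟨k, hk⟩ : ∃ k : ℕ, (1 / 2 : ℝ) ^ k < ε := exists_pow_lt_of_lt_one εpos (by norm_num)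
      refine ⟨k, Or.inr fun y hy => hε ?_⟩
      exact lt_of_le_of_lt (PiNat.mem_cylinder_iff_dist_le.1 hy) hk
  choose k hk using H
  obtain ⟨s, hs⟩ := isCompact_univ.elim_finite_subcover
    (fun x : XX d => PiNat.cylinder x (k x))
    (fun x => PiNat.isOpen_cylinder (E := fun _ => Fin d) x (k x))
    (fun x _ => mem_iUnion.2 ⟨x, PiNat.self_mem_cylinder x (k x)⟩)
  refine ⟨s.sup k, ?_⟩
  have main : ∀ x y : XX d, pref (s.sup k) x = pref (s.sup k) y → x ∈ A → y ∈ A := by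
    intro x y hxy hxA
    obtain ⟨z, hzs, hxz⟩ : ∃ z ∈ s, x ∈ PiNat.cylinder z (k z) := by
      have := hs (mem_univ x)
      simpa using this
    have hkz : k z ≤ s.sup k := Finset.le_sup hzs
    have hyz : y ∈ PiNat.cylinder z (k z) := by
      intro i hi
      have h1 : y i = x i := (pref_eq_iff.1 hxy.symm) i (lt_of_lt_of_le hi hkz)
      rw [h1]
      exact hxz i hi
    rcases hk z with h | h
    · exact h hyz
    · exact absurd (h hxz) (by simpa using hxA)
  intro x y hxy
  exact ⟨main x y hxy, main y x hxy.symm⟩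

lemma isClosed_setOf_subset {T : Set (XX d)} (hT : IsClosed T) :
    IsClosed {B : NonemptyCompacts (XX d) | (B : Set (XX d)) ⊆ T} := by
  rw [← isOpen_compl_iff]
  rw [EMetric.isOpen_iff]
  intro B hB
  obtain ⟨x₀, hx₀B, hx₀T⟩ : ∃ x₀ ∈ (B : Set (XX d)), x₀ ∉ T := by
    simpa [Set.not_subset] using hB
  have hpos : 0 < EMetric.infEdist x₀ T := by
    show 0 < Metric.infEDist x₀ T
    rw [EMetric.infEdist_pos_iff_notMem_closure]
    rwa [hT.closure_eq]
  refine ⟨EMetric.infEdist x₀ T, hpos, fun B' hB' => ?_⟩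
  rw [EMetric.mem_ball] at hB'
  have hhd : EMetric.hausdorffEdist (B : Set (XX d)) (B' : Set (XX d))
      < EMetric.infEdist x₀ T := by
    show Metric.hausdorffEDist _ _ < _
    rw [Metric.hausdorffEDist_comm]
    exact hB'
  obtain ⟨y, hyB', hy⟩ := EMetric.exists_edist_lt_of_hausdorffEdist_lt hx₀B hhd
  intro hsub
  exact absurd (lt_of_le_of_lt (EMetric.infEdist_le_edist_of_mem (hsub hyB')) hy)
    (lt_irrefl _)

end S8

/-- let `G` be a weakly branch group, `ν` a `G`-invariant Borel probability
measure on the space of nonempty compact subsets of `X_d` (with the Hausdorff metric), `A`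
clopen, `Ã ⊇ A` closed with `μ_d(Ã \ A) = 0` for the uniform Bernoulli measure `μ_d`. Then
`ν {B : B ⊆ Ã} = ν {B : B ⊆ A}`. -/
theorem stmt_8 (d : ℕ) (hd : 2 ≤ d) (G : Subgroup (XX d ≃ᵢ XX d)) (hG : WeaklyBranch G)
    (ν : Measure (NonemptyCompacts (XX d))) [IsProbabilityMeasure ν]
    (hinv : ∀ g : XX d ≃ᵢ XX d, g ∈ G → MeasurePreserving (imageNC g) ν ν)
    (μ : Measure (XX d))
    (hμ : ∀ w : List (Fin d), μ (Cyl w) = (1 / (d : ENNReal)) ^ w.length)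
    (A Atil : Set (XX d)) (hA : IsClopen A) (hAtil : IsClosed Atil)
    (hsub : A ⊆ Atil) (hnull : μ (Atil \ A) = 0) :
    ν {B : NonemptyCompacts (XX d) | (B : Set (XX d)) ⊆ Atil} =
      ν {B : NonemptyCompacts (XX d) | (B : Set (XX d)) ⊆ A} := by
  classical
  have hd0 : 0 < d := by omega
  have hdE0 : (d : ENNReal) ≠ 0 := Nat.cast_ne_zero.2 (by omega)
  have hdEtop : (d : ENNReal) ≠ ⊤ := ENNReal.natCast_ne_top d
  set C : Set (XX d) := Atil \ A with hCdef
  have hCclosed : IsClosed C := by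
    rw [hCdef, Set.diff_eq]
    exact hAtil.inter hA.isOpen.isClosed_compl
  obtain ⟨n₀, hn₀⟩ := S8.level_of_clopen hA
  set SAt := {B : NonemptyCompacts (XX d) | (B : Set (XX d)) ⊆ Atil} with hSAtdef
  set SA := {B : NonemptyCompacts (XX d) | (B : Set (XX d)) ⊆ A} with hSAdef
  have hSAtm : MeasurableSet SAt := (S8.isClosed_setOf_subset hAtil).measurableSet
  have hSAm : MeasurableSet SA := (S8.isClosed_setOf_subset hA.isClosed).measurableSet
  set E := SAt \ SA with hEdef
  have hEm : MeasurableSet E := hSAtm.diff hSAm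
  have hsubS : SA ⊆ SAt := fun B hB => Set.Subset.trans hB hsub
  suffices hE0 : ν E = 0 by
    have hunion : SAt = SA ∪ E := by rw [hEdef, Set.union_diff_cancel hsubS]
    rw [hunion, measure_union disjoint_sdiff_right hEm, hE0, add_zero]
  -- the bad cylinders at level `n`
  set Bad : (n : ℕ) → Finset (Fin n → Fin d) :=
    fun n => Finset.univ.filter (fun u => (S8.cls u ∩ C).Nonempty) with hBadDef
  set U : ℕ → Set (XX d) := fun n => ⋃ u ∈ Bad n, S8.cls u with hUdef
  have hUmeas : ∀ n, MeasurableSet (U n) := fun n =>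
    Finset.measurableSet_biUnion _ (fun u _ => S8.measurableSet_cls u)
  have hCU : ∀ n, C ⊆ U n := by
    intro n x hx
    exact mem_iUnion₂.2 ⟨S8.pref n x,
      Finset.mem_filter.2 ⟨Finset.mem_univ _, ⟨x, ⟨rfl, hx⟩⟩⟩, rfl⟩
  have hUanti : Antitone U := by
    intro m n hmn x hx
    obtain ⟨u, hu, hxu⟩ := mem_iUnion₂.1 hx
    obtain ⟨z, hzu, hzC⟩ := (Finset.mem_filter.1 hu).2
    refine mem_iUnion₂.2 ⟨S8.pref m x,
      Finset.mem_filter.2 ⟨Finset.mem_univ _, ⟨z, ?_, hzC⟩⟩, rfl⟩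
    rw [S8.mem_cls, S8.pref_eq_iff]
    intro i hi
    exact S8.pref_eq_iff.1 ((hzu : S8.pref n z = u).trans (hxu : S8.pref n x = u).symm) i
      (lt_of_lt_of_le hi hmn)
  have hUC : ⋂ n, U n = C := by
    apply Set.Subset.antisymm
    · intro y hy
      rw [mem_iInter] at hy
      have hxn : ∀ n : ℕ, ∃ x, x ∈ C ∧ S8.pref n x = S8.pref n y := by
        intro n
        obtain ⟨u, hu, hyu⟩ := mem_iUnion₂.1 (hy n)
        obtain ⟨z, hzu, hzC⟩ := (Finset.mem_filter.1 hu).2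
        exact ⟨z, hzC, (hzu : S8.pref n z = u).trans (hyu : S8.pref n y = u).symm⟩
      choose x hxC hxp using hxn
      have htend : Filter.Tendsto x Filter.atTop (nhds y) := by
        rw [tendsto_iff_dist_tendsto_zero]
        exact squeeze_zero (fun n => dist_nonneg)
          (fun n => S8.pref_eq_iff_dist.1 (hxp n))
          (tendsto_pow_atTop_nhds_zero_of_lt_one (by norm_num) (by norm_num))
      exact hCclosed.mem_of_tendsto htend (Filter.Eventually.of_forall hxC)
    · intro x hx; exact mem_iInter.2 fun n => hCU n hx
  have hμcls : ∀ (n : ℕ) (u : Fin n → Fin d), μ (S8.cls u) = (1 / (d : ENNReal)) ^ n := by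
    intro n u; rw [S8.cls_eq_Cyl, hμ, List.length_ofFn]
  have hμU : ∀ n, μ (U n) = ((Bad n).card : ENNReal) * (1 / (d : ENNReal)) ^ n := by
    intro n
    have hdisj : (↑(Bad n) : Set (Fin n → Fin d)).PairwiseDisjoint S8.cls := by
      intro u _ v _ huv
      exact S8.cls_disjoint huv
    rw [show U n = ⋃ u ∈ Bad n, S8.cls u from rfl,
      measure_biUnion_finset hdisj (fun u _ => S8.measurableSet_cls u),
      Finset.sum_congr rfl (fun u _ => hμcls n u), Finset.sum_const, nsmul_eq_mul]
  have hμuniv : μ univ = 1 := by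
    have h1 : Cyl ([] : List (Fin d)) = univ := by
      ext x
      simp only [Cyl, mem_setOf_eq, mem_univ, iff_true]
      intro i
      exact absurd i.2 (by simp)
    have := hμ ([] : List (Fin d))
    rw [h1] at this
    simpa using this
  have hUfin : μ (U 0) ≠ ⊤ := by
    refine ne_of_lt (lt_of_le_of_lt (measure_mono (subset_univ _)) ?_)
    rw [hμuniv]; exact ENNReal.one_lt_top
  -- key estimate
  have key : ∀ n : ℕ, ν E * (d : ENNReal) ^ n ≤ (d : ENNReal) ^ n₀ * ((Bad n).card : ENNReal) := by
    intro n
    set QFn := S8.QF hd0 n G with hQFdef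
    have hQF1 : (1 : Equiv.Perm (Fin n → Fin d)) ∈ QFn := S8.mem_QF.2 (one_mem _)
    set glift : Equiv.Perm (Fin n → Fin d) → (XX d ≃ᵢ XX d) :=
      fun π => if h : π ∈ S8.QS hd0 n G then h.choose else 1 with hgliftdef
    have hgl : ∀ π ∈ QFn, glift π ∈ G ∧ S8.permOf hd0 n (glift π) = π := by
      intro π hπ
      have h : π ∈ S8.QS hd0 n G := S8.mem_QF.1 hπ
      rw [hgliftdef]
      simp only [dif_pos h]
      exact ⟨h.choose_spec.1, h.choose_spec.2⟩
    have claim : ∀ B : NonemptyCompacts (XX d),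
        ((QFn.filter (fun π => imageNC (glift π) B ∈ E)).card) * d ^ n
          ≤ d ^ n₀ * ((Bad n).card * QFn.card) := by
      intro B
      set T : Finset (Fin n₀ → Fin d) :=
        Finset.univ.filter (fun u => ∃ x ∈ (B : Set (XX d)), S8.pref n₀ x = u) with hTdef
      set rep : (Fin n₀ → Fin d) → XX d :=
        fun u => if h : ∃ x, x ∈ (B : Set (XX d)) ∧ S8.pref n₀ x = u then h.choose
          else B.nonempty.some with hrepdef
      have hrepspec : ∀ u ∈ T, rep u ∈ (B : Set (XX d)) ∧ S8.pref n₀ (rep u) = u := by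
        intro u hu
        have h : ∃ x, x ∈ (B : Set (XX d)) ∧ S8.pref n₀ x = u := by
          have := (Finset.mem_filter.1 hu).2
          simpa using this
        rw [hrepdef]
        simp only [dif_pos h]
        exact ⟨h.choose_spec.1, h.choose_spec.2⟩
      have hsubB : QFn.filter (fun π => imageNC (glift π) B ∈ E)
          ⊆ T.biUnion (fun u => QFn.filter (fun π => π (S8.pref n (rep u)) ∈ Bad n)) := by
        intro π hπ
        rw [Finset.mem_filter] at hπ
        obtain ⟨hπQ, hπE⟩ := hπ
        have hgsub : (glift π : XX d ≃ᵢ XX d) '' (B : Set (XX d)) ⊆ Atil := hπE.1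
        have hgnot : ¬ ((glift π : XX d ≃ᵢ XX d) '' (B : Set (XX d)) ⊆ A) := hπE.2
        obtain ⟨z, hzB, hzA⟩ := Set.not_subset.1 hgnot
        obtain ⟨x₀, hx₀B, rfl⟩ := hzB
        have huT : S8.pref n₀ x₀ ∈ T :=
          Finset.mem_filter.2 ⟨Finset.mem_univ _, ⟨x₀, hx₀B, rfl⟩⟩
        obtain ⟨hxB, hxp⟩ := hrepspec _ huT
        have hgx : (glift π : XX d ≃ᵢ XX d) (rep (S8.pref n₀ x₀)) ∈ C := by
          constructor
          · exact hgsub (mem_image_of_mem _ hxB)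
          · intro hgA
            have hp : S8.pref n₀ ((glift π : XX d ≃ᵢ XX d) (rep (S8.pref n₀ x₀)))
                = S8.pref n₀ ((glift π : XX d ≃ᵢ XX d) x₀) := S8.pref_eq_map _ hxp
            exact hzA ((hn₀ _ _ hp).1 hgA)
        refine Finset.mem_biUnion.2 ⟨_, huT, Finset.mem_filter.2 ⟨hπQ, ?_⟩⟩
        have hππ : π (S8.pref n (rep (S8.pref n₀ x₀)))
            = S8.pref n ((glift π : XX d ≃ᵢ XX d) (rep (S8.pref n₀ x₀))) := by
          have h2 := S8.permOf_apply_pref hd0 n (glift π) (rep (S8.pref n₀ x₀))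
          rw [(hgl π hπQ).2] at h2
          exact h2
        rw [hππ]
        exact Finset.mem_filter.2 ⟨Finset.mem_univ _, ⟨_, rfl, hgx⟩⟩
      calc (QFn.filter fun π => imageNC (glift π) B ∈ E).card * d ^ n
          ≤ (T.biUnion fun u =>
              QFn.filter (fun π => π (S8.pref n (rep u)) ∈ Bad n)).card * d ^ n :=
            Nat.mul_le_mul_right _ (Finset.card_le_card hsubB)
        _ ≤ (∑ u ∈ T, (QFn.filter (fun π => π (S8.pref n (rep u)) ∈ Bad n)).card) * d ^ n :=
            Nat.mul_le_mul_right _ Finset.card_biUnion_le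
        _ = ∑ u ∈ T, ((QFn.filter (fun π => π (S8.pref n (rep u)) ∈ Bad n)).card * d ^ n) := by
            rw [Finset.sum_mul]
        _ = ∑ _u ∈ T, ((Bad n).card * QFn.card) :=
            Finset.sum_congr rfl fun u _ => S8.count_in hG.1 hd0 n _ (Bad n)
        _ = T.card * ((Bad n).card * QFn.card) := by rw [Finset.sum_const, smul_eq_mul]
        _ ≤ d ^ n₀ * ((Bad n).card * QFn.card) := by
            refine Nat.mul_le_mul_right _ ?_
            calc T.card ≤ (Finset.univ : Finset (Fin n₀ → Fin d)).card := Finset.card_le_univ T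
              _ = d ^ n₀ := by rw [Finset.card_univ, S8.card_words]
    have hSm : ∀ π ∈ QFn, MeasurableSet ((imageNC (glift π)) ⁻¹' E) :=
      fun π hπ => (hinv _ (hgl π hπ).1).measurable hEm
    have step2 : ∑ π ∈ QFn, ν ((imageNC (glift π)) ⁻¹' E) = (QFn.card : ENNReal) * ν E := by
      rw [Finset.sum_congr rfl
        (fun π hπ => (hinv _ (hgl π hπ).1).measure_preimage hEm.nullMeasurableSet),
        Finset.sum_const, nsmul_eq_mul]
    have step3 : ∑ π ∈ QFn, ν ((imageNC (glift π)) ⁻¹' E)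
        = ∫⁻ B, ∑ π ∈ QFn,
            ((imageNC (glift π)) ⁻¹' E).indicator (fun _ => (1 : ENNReal)) B ∂ν := by
      rw [lintegral_finset_sum _ (fun π hπ => measurable_const.indicator (hSm π hπ))]
      exact (Finset.sum_congr rfl fun π hπ => (lintegral_indicator_one (hSm π hπ)).symm)
    have hmeas_sum : Measurable (fun B => ∑ π ∈ QFn,
        ((imageNC (glift π)) ⁻¹' E).indicator (fun _ => (1 : ENNReal)) B) :=
      Finset.measurable_sum _ (fun π hπ => measurable_const.indicator (hSm π hπ))
    have hptwise : ∀ B, (∑ π ∈ QFn,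
        ((imageNC (glift π)) ⁻¹' E).indicator (fun _ => (1 : ENNReal)) B) * (d : ENNReal) ^ n
        ≤ ((d : ENNReal)) ^ n₀ * (((Bad n).card : ENNReal) * (QFn.card : ENNReal)) := by
      intro B
      have hsum : ∑ π ∈ QFn,
          ((imageNC (glift π)) ⁻¹' E).indicator (fun _ => (1 : ENNReal)) B
          = ((QFn.filter (fun π => imageNC (glift π) B ∈ E)).card : ENNReal) := by
        simp only [Set.indicator_apply, Set.mem_preimage]
        rw [Finset.sum_boole]
      rw [hsum]
      have hc := claim B
      calc ((QFn.filter (fun π => imageNC (glift π) B ∈ E)).card : ENNReal) * (d : ENNReal) ^ n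
          = (((QFn.filter (fun π => imageNC (glift π) B ∈ E)).card * d ^ n : ℕ) : ENNReal) := by
            push_cast; ring
        _ ≤ ((d ^ n₀ * ((Bad n).card * QFn.card) : ℕ) : ENNReal) := by exact_mod_cast hc
        _ = ((d : ENNReal)) ^ n₀ * (((Bad n).card : ENNReal) * (QFn.card : ENNReal)) := by
            push_cast; ring
    have chain : (QFn.card : ENNReal) * (ν E * (d : ENNReal) ^ n)
        ≤ (QFn.card : ENNReal) * ((d : ENNReal) ^ n₀ * ((Bad n).card : ENNReal)) := by
      calc (QFn.card : ENNReal) * (ν E * (d : ENNReal) ^ n)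
          = ((QFn.card : ENNReal) * ν E) * (d : ENNReal) ^ n := by ring
        _ = (∑ π ∈ QFn, ν ((imageNC (glift π)) ⁻¹' E)) * (d : ENNReal) ^ n := by rw [step2]
        _ = (∫⁻ B, ∑ π ∈ QFn,
              ((imageNC (glift π)) ⁻¹' E).indicator (fun _ => (1 : ENNReal)) B ∂ν)
            * (d : ENNReal) ^ n := by rw [step3]
        _ = ∫⁻ B, (∑ π ∈ QFn,
              ((imageNC (glift π)) ⁻¹' E).indicator (fun _ => (1 : ENNReal)) B)
            * (d : ENNReal) ^ n ∂ν := (lintegral_mul_const _ hmeas_sum).symm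
        _ ≤ ∫⁻ _B, ((d : ENNReal)) ^ n₀ * (((Bad n).card : ENNReal) * (QFn.card : ENNReal)) ∂ν :=
            lintegral_mono hptwise
        _ = ((d : ENNReal)) ^ n₀ * (((Bad n).card : ENNReal) * (QFn.card : ENNReal)) := by
            rw [lintegral_const, measure_univ, mul_one]
        _ = (QFn.card : ENNReal) * ((d : ENNReal) ^ n₀ * ((Bad n).card : ENNReal)) := by ring
    have hQFne : (QFn.card : ENNReal) ≠ 0 :=
      Nat.cast_ne_zero.2 (Finset.card_ne_zero_of_mem hQF1)
    exact (ENNReal.mul_le_mul_iff_right hQFne (ENNReal.natCast_ne_top _)).1 chain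
  have hfin : ∀ n : ℕ, ν E ≤ (d : ENNReal) ^ n₀ * μ (U n) := by
    intro n
    have h1 : (d : ENNReal) ^ n * (1 / (d : ENNReal)) ^ n = 1 := by
      rw [← mul_pow, mul_one_div, ENNReal.div_self hdE0 hdEtop, one_pow]
    calc ν E = ν E * ((d : ENNReal) ^ n * (1 / (d : ENNReal)) ^ n) := by rw [h1, mul_one]
      _ = (ν E * (d : ENNReal) ^ n) * (1 / (d : ENNReal)) ^ n := by ring
      _ ≤ ((d : ENNReal) ^ n₀ * ((Bad n).card : ENNReal)) * (1 / (d : ENNReal)) ^ n :=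
          mul_le_mul_of_nonneg_right (key n) zero_le
      _ = (d : ENNReal) ^ n₀ * μ (U n) := by rw [hμU n]; ring
  have hlim : Filter.Tendsto (fun n => (d : ENNReal) ^ n₀ * μ (U n)) Filter.atTop (nhds 0) := by
    have h0 : Filter.Tendsto (fun n => μ (U n)) Filter.atTop (nhds (μ (⋂ n, U n))) := by
      have := tendsto_measure_iInter_atTop (μ := μ)
        (fun n => (hUmeas n).nullMeasurableSet) hUanti ⟨0, hUfin⟩
      exact this
    rw [hUC, hnull] at h0
    have := ENNReal.Tendsto.const_mul (a := (d : ENNReal) ^ n₀) h0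
      (Or.inr (ENNReal.pow_ne_top hdEtop))
    simpa using this
  have hle : ν E ≤ 0 := ge_of_tendsto hlim (Filter.Eventually.of_forall hfin)
  exact le_antisymm hle zero_le
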